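/- Let Γ = (E, op, nx, P) be a connected oriented skeleton. For a region R with |R ∩ P| even, define the fundamental cycle z_R : E → ℤ² as follows: fix α_0 ∈ R, let n = |R|, and let β_0 = α_0, β_{2i+1} = op(β_{2i}), β_{2i+2} = nx^{−1}(β_{2i+1}) for 0 ≤ i < n (so β_{2n} = α_0); set h_0 = (1, 0) ∈ ℤ² and h_i = M_i·h_{i−1} for 1 ≤ i ≤ 2n, where M_i = −X if the i-th step is an nx^{−1}-step, M_i = −Y if the i-th step is an op-step with β_i ∈ P, and M_i = Y if it is an op-step with β_i ∉ P; finally let z_R(α) = Σ h_i, the sum over all i ∈ {1, …, 2n} with β_i = α. Then each such z_R lies in H_Γ and in the radical of the form q on H_Γ, and the collection of the z_R, taken over all regions R with |R ∩ P| even, is a ℤ-basis of the radical of (H_Γ, q). -/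

import Mathlib

/-- The matrix `X = [[-1, 1], [-1, 0]] ∈ SL(2, ℤ)` acting on column vectors `ℤ²`. -/
def Xact : ℤ × ℤ →+ ℤ × ℤ :=
  AddMonoidHom.mk' (fun v => (-v.1 + v.2, -v.1))
    (by
      intro a b
      simp only [Prod.fst_add, Prod.snd_add, Prod.mk_add_mk, Prod.mk.injEq]
      constructor <;> ring)

/-- The matrix `Y = [[0, -1], [1, 0]] ∈ SL(2, ℤ)` acting on column vectors `ℤ²`. -/
def Yact : ℤ × ℤ →+ ℤ × ℤ :=
  AddMonoidHom.mk' (fun v => (-v.2, v.1))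
    (by
      intro a b
      simp only [Prod.fst_add, Prod.snd_add, Prod.mk_add_mk, Prod.mk.injEq]
      constructor <;> (try trivial) <;> ring)

/-- The antisymmetric pairing `⟨u, v⟩ = u₁v₂ - u₂v₁` on `ℤ²`. -/
def skist (u v : ℤ × ℤ) : ℤ := u.1 * v.2 - u.2 * v.1

variable {E : Type*}

/-- The vertex condition at `α`: `h(α) + X·h(nx α) + X²·h(nx² α)`. -/
def condV (nx : Equiv.Perm E) (α : E) : (E → ℤ × ℤ) →+ ℤ × ℤ :=
  AddMonoidHom.mk' (fun h => h α + Xact (h (nx α)) + Xact (Xact (h (nx (nx α)))))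
    (by intro a b; simp only [Pi.add_apply, map_add]; abel)

/-- The edge condition at a head `α`: `h(α) + Y·h(op α)`. -/
def condE (op : Equiv.Perm E) (α : E) : (E → ℤ × ℤ) →+ ℤ × ℤ :=
  AddMonoidHom.mk' (fun h => h α + Yact (h (op α)))
    (by intro a b; simp only [Pi.add_apply, map_add]; abel)

/-- The group `H_Γ` of an oriented skeleton `Γ = (E, op, nx, P)`: functions
`h : E → ℤ²` with `h(α) + X·h(nx α) + X²·h(nx² α) = 0` for all `α` and
`h(α) + Y·h(op α) = 0` for all heads `α ∈ P`. -/
def HGrp [DecidableEq E] (op nx : Equiv.Perm E) (P : Finset E) :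
    AddSubgroup (E → ℤ × ℤ) :=
  (⨅ α : E, (condV nx α).ker) ⊓ (⨅ α ∈ P, (condE op α).ker)

/-- The symmetric bilinear form associated with the quadratic form
`q(h) = -(1/3) ∑_α ⟨h(α), X·h(nx α)⟩`; one has `Bq nx h h = q h`. -/
def Bq [Fintype E] (nx : Equiv.Perm E) (h g : E → ℤ × ℤ) : ℚ :=
  -(1 / 6 : ℚ) *
    ∑ α : E, ((skist (h α) (Xact (g (nx α))) : ℚ) + (skist (g α) (Xact (h (nx α))) : ℚ))

/-- The region (orbit of `nx⁻¹ ∘ op`) containing `α`. -/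
def regionOf [Fintype E] [DecidableEq E] (ρ : Equiv.Perm E) (α : E) : Finset E :=
  Finset.univ.filter fun b => ρ.SameCycle α b

/-- The sequence `β` of the boundary walk of the region containing `α₀`:
`β₀ = α₀`, `β_{2i+1} = op β_{2i}`, `β_{2i+2} = nx⁻¹ β_{2i+1}`. -/
def beta (op nx : Equiv.Perm E) (α₀ : E) : ℕ → E
  | 0 => α₀
  | j + 1 => if Even j then op (beta op nx α₀ j) else nx⁻¹ (beta op nx α₀ j)

/-- The vectors carried along the boundary walk: `h₀ = (1, 0)`, `h_i = M_i h_{i-1}`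
where `M_i = -X` for an `nx⁻¹`-step and `M_i = ∓Y` for an `op`-step according to
whether `β_i ∈ P` or not. -/
def hstep [DecidableEq E] (op nx : Equiv.Perm E) (P : Finset E) (α₀ : E) : ℕ → ℤ × ℤ
  | 0 => (1, 0)
  | j + 1 =>
    if Even j then
      (if beta op nx α₀ (j + 1) ∈ P then -(Yact (hstep op nx P α₀ j))
        else Yact (hstep op nx P α₀ j))
    else -(Xact (hstep op nx P α₀ j))

/-- The fundamental cycle `z_R` of the region `R` containing `α₀`:
`z_R(α) = ∑ h_i`, the sum over all `i ∈ {1, …, 2n}` with `β_i = α`,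
where `n = |R|`. -/
def zfun [Fintype E] [DecidableEq E] (op nx : Equiv.Perm E) (P : Finset E) (α₀ : E) :
    E → ℤ × ℤ :=
  fun α => ∑ i ∈ Finset.Icc 1 (2 * (regionOf (nx⁻¹ * op) α₀).card),
    if beta op nx α₀ i = α then hstep op nx P α₀ i else 0

set_option linter.unusedSectionVars false

theorem Equiv.Perm.apply_inv_self {α : Type*} (f : Equiv.Perm α) (x : α) : f (f⁻¹ x) = x :=
  f.apply_symm_apply x

theorem Equiv.Perm.inv_apply_self {α : Type*} (f : Equiv.Perm α) (x : α) : f⁻¹ (f x) = x :=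
  f.symm_apply_apply x

section PairArith

lemma Xact_apply (v : ℤ × ℤ) : Xact v = (-v.1 + v.2, -v.1) := rfl

lemma Yact_apply (v : ℤ × ℤ) : Yact v = (-v.2, v.1) := rfl

lemma Xact_Xact (v : ℤ × ℤ) : Xact (Xact v) = (-v.2, v.1 - v.2) := by
  simp only [Xact_apply]; exact Prod.ext (by ring) (by ring)

lemma Xact_Xact_Xact (v : ℤ × ℤ) : Xact (Xact (Xact v)) = v := by
  simp [Xact_apply, Xact_Xact]

lemma Yact_Yact (v : ℤ × ℤ) : Yact (Yact v) = -v := by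
  simp only [Yact_apply]; exact Prod.ext (by simp) (by simp)

end PairArith

section PermBasics

variable {E : Type*} (op nx : Equiv.Perm E)

lemma op_op (hop2 : op * op = 1) (a : E) : op (op a) = a := by
  have := congrArg (fun f => f a) (congrArg (Equiv.toFun) hop2)
  simpa using this

lemma nx_nx_nx (hnx3 : nx * nx * nx = 1) (a : E) : nx (nx (nx a)) = a := by
  have := congrArg (fun f => f a) (congrArg (Equiv.toFun) hnx3)
  simpa using this

lemma nxinv_eq (hnx3 : nx * nx * nx = 1) (a : E) : nx⁻¹ a = nx (nx a) := by
  apply nx.injective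
  rw [Equiv.Perm.apply_inv_self, nx_nx_nx nx hnx3]

lemma nx_ne_self {nx : Equiv.Perm E} (hnxf : ∀ α, nx α ≠ α) (a : E) : nx a ≠ a := hnxf a

lemma nx_nx_ne_self {nx : Equiv.Perm E} (hnx3 : nx * nx * nx = 1) (hnxf : ∀ α, nx α ≠ α)
    (a : E) : nx (nx a) ≠ a := by
  intro h
  have h2 : nx (nx (nx a)) = nx a := congrArg nx h
  rw [nx_nx_nx nx hnx3] at h2
  exact hnxf a h2.symm

end PermBasics

section Membership

variable {E : Type*} [DecidableEq E] (op nx : Equiv.Perm E) (P : Finset E)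

lemma mem_HGrp_iff {h : E → ℤ × ℤ} :
    h ∈ HGrp op nx P ↔ (∀ α, condV nx α h = 0) ∧ ∀ α ∈ P, condE op α h = 0 := by
  simp [HGrp, AddSubgroup.mem_inf, AddSubgroup.mem_iInf, AddMonoidHom.mem_ker]

lemma condV_eq (α : E) (h : E → ℤ × ℤ) :
    condV nx α h = h α + Xact (h (nx α)) + Xact (Xact (h (nx (nx α)))) := rfl

lemma condE_eq (α : E) (h : E → ℤ × ℤ) :
    condE op α h = h α + Yact (h (op α)) := rfl

end Membership

section DiagonalIdentity

variable {E : Type*} [Fintype E] [DecidableEq E]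

/-- The vertex defect `d(α) = h(α)₁ + h(nx α)₂`. -/
def dd (nx : Equiv.Perm E) (h : E → ℤ × ℤ) (α : E) : ℤ := (h α).1 + (h (nx α)).2

def tfun (nx : Equiv.Perm E) (h : E → ℤ × ℤ) (α : E) : ℤ :=
  skist (h α) (Xact (h (nx α))) + dd nx h α * dd nx h α

def pfun (h : E → ℤ × ℤ) (α : E) : ℤ := (h α).1 * (h α).2

lemma sum_shift (σ : Equiv.Perm E) (f : E → ℤ) : ∑ α : E, f (σ α) = ∑ α : E, f α :=
  Equiv.sum_comp (σ : E ≃ E) f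

/-- Local vertex identity for the diagonal form. -/
lemma vertex_ident (a0 a1 a2 : ℤ × ℤ) (hv : a0 + Xact a1 + Xact (Xact a2) = 0) :
    (skist a0 (Xact a1) + (a0.1 + a1.2) * (a0.1 + a1.2)) +
      (skist a1 (Xact a2) + (a1.1 + a2.2) * (a1.1 + a2.2)) +
      (skist a2 (Xact a0) + (a2.1 + a0.2) * (a2.1 + a0.2)) =
      3 * (a0.1 * a0.2 + a1.1 * a1.2 + a2.1 * a2.2) := by
  have e1 : a0.1 + (-a1.1 + a1.2) + -a2.2 = 0 := by
    simpa [Xact_apply, Xact_Xact] using congrArg Prod.fst hv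
  have e2 : a0.2 + -a1.1 + (a2.1 - a2.2) = 0 := by
    have := congrArg Prod.snd hv
    simp [Xact_apply, Xact_Xact] at this
    linarith
  have hp : a0.1 = a1.1 - a1.2 + a2.2 := by linarith
  have hq : a0.2 = a1.1 - a2.1 + a2.2 := by linarith
  simp only [skist, Xact_apply, hp, hq]
  ring

/-- Local edge identity: if `u + Y v = 0` then `u₁u₂ + v₁v₂ = 0`. -/
lemma edge_ident (u v : ℤ × ℤ) (he : u + Yact v = 0) :
    u.1 * u.2 + v.1 * v.2 = 0 := by
  have e1 : u.1 + -v.2 = 0 := congrArg Prod.fst he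
  have e2 : u.2 + v.1 = 0 := congrArg Prod.snd he
  have h1 : u.1 = v.2 := by linarith
  have h2 : u.2 = -v.1 := by linarith
  rw [h1, h2]; ring

variable (op nx : Equiv.Perm E) (P : Finset E)

/-- The global diagonal identity: for `h ∈ H_Γ`,
`∑ ⟨h α, X h (nx α)⟩ = -∑ d(α)²`. -/
lemma diag_ident (hop2 : op * op = 1) (hnx3 : nx * nx * nx = 1)
    (hP : ∀ α, α ∈ P ↔ op α ∉ P)
    {h : E → ℤ × ℤ} (hh : h ∈ HGrp op nx P) :
    ∑ α : E, skist (h α) (Xact (h (nx α))) = -∑ α : E, dd nx h α * dd nx h α := by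
  obtain ⟨hV, hE⟩ := (mem_HGrp_iff op nx P).1 hh
  -- edge cancellation
  have hedge : ∀ α : E, pfun h α + pfun h (op α) = 0 := by
    intro α
    by_cases hα : α ∈ P
    · exact edge_ident _ _ (hE α hα)
    · have hop : op α ∈ P := by
        by_contra hc
        exact hc ((hP (op α)).2 (by rwa [op_op op hop2]))
      have := edge_ident _ _ (hE (op α) hop)
      rw [op_op op hop2] at this
      simp only [pfun]
      linarith
  -- vertex identity
  have hvert : ∀ α : E, tfun nx h α + tfun nx h (nx α) + tfun nx h (nx (nx α)) =
      3 * (pfun h α + pfun h (nx α) + pfun h (nx (nx α))) := by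
    intro α
    have h3 : nx (nx (nx α)) = α := nx_nx_nx nx hnx3 α
    have hv := hV α
    rw [condV_eq] at hv
    have base := vertex_ident (h α) (h (nx α)) (h (nx (nx α))) hv
    simp only [tfun, pfun, dd, h3]
    exact base
  -- sum of pfun is zero
  have hsumφ : ∑ α : E, pfun h α = 0 := by
    have h0 : ∑ α : E, (pfun h α + pfun h (op α)) = 0 :=
      Finset.sum_eq_zero fun α _ => hedge α
    rw [Finset.sum_add_distrib, sum_shift op (pfun h)] at h0
    linarith
  -- sum of tfun is zero
  have hsumt : ∑ α : E, tfun nx h α = 0 := by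
    have l1 : ∑ α : E, (tfun nx h α + tfun nx h (nx α) + tfun nx h (nx (nx α))) =
        3 * ∑ α : E, tfun nx h α := by
      rw [Finset.sum_add_distrib, Finset.sum_add_distrib, sum_shift nx (tfun nx h),
        show (∑ α : E, tfun nx h (nx (nx α))) = ∑ α : E, tfun nx h α from
          sum_shift nx (fun β => tfun nx h (nx β)) ▸ sum_shift nx (tfun nx h) ▸ rfl]
      ring
    have l2 : ∑ α : E, (3 * (pfun h α + pfun h (nx α) + pfun h (nx (nx α)))) =
        3 * (3 * ∑ α : E, pfun h α) := by
      rw [← Finset.mul_sum]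
      congr 1
      rw [Finset.sum_add_distrib, Finset.sum_add_distrib, sum_shift nx (pfun h),
        show (∑ α : E, pfun h (nx (nx α))) = ∑ α : E, pfun h α from
          sum_shift nx (fun β => pfun h (nx β)) ▸ sum_shift nx (pfun h) ▸ rfl]
      ring
    have l3 : ∑ α : E, (tfun nx h α + tfun nx h (nx α) + tfun nx h (nx (nx α))) =
        ∑ α : E, (3 * (pfun h α + pfun h (nx α) + pfun h (nx (nx α)))) :=
      Finset.sum_congr rfl fun α _ => hvert α
    rw [l1, l2, hsumφ] at l3
    linarith
  have : ∑ α : E, (skist (h α) (Xact (h (nx α))) + dd nx h α * dd nx h α) = 0 := by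
    simpa [tfun] using hsumt
  rw [Finset.sum_add_distrib] at this
  linarith

end DiagonalIdentity

section Polarization

variable {E : Type*} [Fintype E] [DecidableEq E]

lemma skist_add_add (a b c d : ℤ × ℤ) :
    skist (a + b) (c + d) = skist a c + skist a d + skist b c + skist b d := by
  simp only [skist, Prod.fst_add, Prod.snd_add]; ring

lemma dd_add (nx : Equiv.Perm E) (h g : E → ℤ × ℤ) (α : E) :
    dd nx (h + g) α = dd nx h α + dd nx g α := by
  simp only [dd, Pi.add_apply, Prod.fst_add, Prod.snd_add]; ring

variable (op nx : Equiv.Perm E) (P : Finset E)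

lemma bil_ident (hop2 : op * op = 1) (hnx3 : nx * nx * nx = 1)
    (hP : ∀ α, α ∈ P ↔ op α ∉ P)
    {h g : E → ℤ × ℤ} (hh : h ∈ HGrp op nx P) (hg : g ∈ HGrp op nx P) :
    ∑ α : E, (skist (h α) (Xact (g (nx α))) + skist (g α) (Xact (h (nx α)))) =
      -2 * ∑ α : E, dd nx h α * dd nx g α := by
  have dh := diag_ident op nx P hop2 hnx3 hP hh
  have dg := diag_ident op nx P hop2 hnx3 hP hg
  have dhg := diag_ident op nx P hop2 hnx3 hP ((HGrp op nx P).add_mem hh hg)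
  have expand : ∑ α : E, skist ((h + g) α) (Xact ((h + g) (nx α))) =
      ∑ α : E, skist (h α) (Xact (h (nx α))) + ∑ α : E, skist (g α) (Xact (g (nx α))) +
      ∑ α : E, (skist (h α) (Xact (g (nx α))) + skist (g α) (Xact (h (nx α)))) := by
    rw [← Finset.sum_add_distrib, ← Finset.sum_add_distrib]
    refine Finset.sum_congr rfl fun α _ => ?_
    simp only [Pi.add_apply, map_add]
    rw [skist_add_add]
    ring
  have expand2 : ∑ α : E, dd nx (h + g) α * dd nx (h + g) α =
      ∑ α : E, dd nx h α * dd nx h α + ∑ α : E, dd nx g α * dd nx g α +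
      2 * ∑ α : E, dd nx h α * dd nx g α := by
    rw [Finset.mul_sum, ← Finset.sum_add_distrib, ← Finset.sum_add_distrib]
    refine Finset.sum_congr rfl fun α _ => ?_
    rw [dd_add]
    ring
  rw [expand, expand2] at dhg
  linarith

lemma Bq_eq_dd (hop2 : op * op = 1) (hnx3 : nx * nx * nx = 1)
    (hP : ∀ α, α ∈ P ↔ op α ∉ P)
    {h g : E → ℤ × ℤ} (hh : h ∈ HGrp op nx P) (hg : g ∈ HGrp op nx P) :
    Bq nx h g = (1 / 3 : ℚ) * ((∑ α : E, dd nx h α * dd nx g α : ℤ) : ℚ) := by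
  have key := bil_ident op nx P hop2 hnx3 hP hh hg
  have cast1 : ∑ α : E, ((skist (h α) (Xact (g (nx α))) : ℚ) + (skist (g α) (Xact (h (nx α))) : ℚ)) =
      ((∑ α : E, (skist (h α) (Xact (g (nx α))) + skist (g α) (Xact (h (nx α)))) : ℤ) : ℚ) := by
    push_cast
    rfl
  rw [Bq, cast1, key]
  push_cast
  ring

lemma radical_dd_zero (hop2 : op * op = 1) (hnx3 : nx * nx * nx = 1)
    (hP : ∀ α, α ∈ P ↔ op α ∉ P)
    {h : E → ℤ × ℤ} (hh : h ∈ HGrp op nx P) (hq : Bq nx h h = 0) :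
    ∀ α, dd nx h α = 0 := by
  have := Bq_eq_dd op nx P hop2 hnx3 hP hh hh
  rw [hq] at this
  have hz2 : (∑ α : E, dd nx h α * dd nx h α : ℤ) = 0 := by
    have h3 : ((∑ α : E, dd nx h α * dd nx h α : ℤ) : ℚ) = 0 := by linarith
    exact_mod_cast h3
  intro α
  have hnn : ∀ i ∈ Finset.univ, (0 : ℤ) ≤ dd nx h i * dd nx h i :=
    fun i _ => mul_self_nonneg _
  have := (Finset.sum_eq_zero_iff_of_nonneg hnn).1 hz2 α (Finset.mem_univ α)
  exact mul_self_eq_zero.1 this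

end Polarization

section Cycle

variable {E : Type*} [Fintype E] [DecidableEq E]

lemma fix_zpow (τ : Equiv.Perm E) {a : E} (ha : τ a = a) : ∀ q : ℤ, (τ ^ q) a = a := by
  have hinv : τ⁻¹ a = a := by
    conv_lhs => rw [← ha]
    exact τ.inv_apply_self a
  intro q
  induction q using Int.induction_on with
  | zero => rfl
  | succ k ih =>
      rw [zpow_add_one, Equiv.Perm.mul_apply, ha, ih]
  | pred k ih =>
      rw [zpow_sub_one, Equiv.Perm.mul_apply, hinv, ih]

variable (σ : Equiv.Perm E) (a : E)

lemma exists_pos_pow_fix : ∃ k, 0 < k ∧ (σ ^ k) a = a :=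
  ⟨orderOf σ, orderOf_pos σ, by rw [pow_orderOf_eq_one]; rfl⟩

/-- The minimal period of `a` under `σ`. -/
def minPer : ℕ := Nat.find (exists_pos_pow_fix σ a)

lemma minPer_pos : 0 < minPer σ a := (Nat.find_spec (exists_pos_pow_fix σ a)).1

lemma pow_minPer_fix : (σ ^ minPer σ a) a = a := (Nat.find_spec (exists_pos_pow_fix σ a)).2

lemma minPer_min {k : ℕ} (hk : 0 < k) (hkm : k < minPer σ a) : (σ ^ k) a ≠ a := by
  intro h
  exact Nat.find_min (exists_pos_pow_fix σ a) hkm ⟨hk, h⟩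

lemma pow_mod_minPer (j : ℕ) : (σ ^ j) a = (σ ^ (j % minPer σ a)) a := by
  induction j using Nat.strong_induction_on with
  | _ j ih =>
    by_cases hj : j < minPer σ a
    · rw [Nat.mod_eq_of_lt hj]
    · push_neg at hj
      have hsub : j = (j - minPer σ a) + minPer σ a := by omega
      have e1 : (σ ^ j) a = (σ ^ (j - minPer σ a)) a := by
        conv_lhs => rw [hsub]
        rw [pow_add, Equiv.Perm.mul_apply, pow_minPer_fix]
      have e2 := ih (j - minPer σ a) (by have := minPer_pos σ a; omega)
      rw [e1, e2, Nat.mod_eq_sub_mod hj]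

lemma sameCycle_iff_exists_lt {b : E} :
    σ.SameCycle a b ↔ ∃ k < minPer σ a, (σ ^ k) a = b := by
  constructor
  · rintro ⟨i, hi⟩
    have hm : (0 : ℤ) < (minPer σ a : ℤ) := by exact_mod_cast minPer_pos σ a
    set r := i % (minPer σ a : ℤ) with hr
    have hr0 : 0 ≤ r := Int.emod_nonneg i (by omega)
    have hrm : r < (minPer σ a : ℤ) := Int.emod_lt_of_pos i hm
    have hdecomp : i = r + (minPer σ a : ℤ) * (i / (minPer σ a : ℤ)) :=
      (Int.emod_add_mul_ediv i (minPer σ a : ℤ)).symm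
    have e1 : (σ ^ i) a = (σ ^ r) a := by
      rw [hdecomp, zpow_add, Equiv.Perm.mul_apply]
      rw [zpow_mul, show ((minPer σ a : ℤ)) = ((minPer σ a : ℕ) : ℤ) from rfl, zpow_natCast]
      rw [fix_zpow (σ ^ minPer σ a) (pow_minPer_fix σ a) _]
    have htn : ((r.toNat : ℤ)) = r := Int.toNat_of_nonneg hr0
    refine ⟨r.toNat, by omega, ?_⟩
    rw [← hi, e1, ← zpow_natCast, htn]
  · rintro ⟨k, _, hk⟩
    exact ⟨(k : ℤ), by rw [zpow_natCast]; exact hk⟩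

lemma injOn_pow_minPer :
    ∀ i < minPer σ a, ∀ j < minPer σ a, (σ ^ i) a = (σ ^ j) a → i = j := by
  have key : ∀ i j, i ≤ j → j < minPer σ a → (σ ^ i) a = (σ ^ j) a → i = j := by
    intro i j hij hjm heq
    by_contra hne
    have hlt : i < j := lt_of_le_of_ne hij hne
    have e0 : i + (j - i) = j := by omega
    have e1 : (σ ^ j) a = (σ ^ i) ((σ ^ (j - i)) a) := by
      conv_lhs => rw [← e0]
      rw [pow_add, Equiv.Perm.mul_apply]
    rw [e1] at heq
    have hfix : (σ ^ (j - i)) a = a := (σ ^ i).injective heq.symm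
    have hk1 : 0 < j - i := by omega
    have hk2 : j - i < minPer σ a := by omega
    exact minPer_min σ a hk1 hk2 hfix
  intro i hi j hj heq
  rcases le_total i j with h | h
  · exact key i j h hj heq
  · exact (key j i h hi heq.symm).symm

lemma regionOf_eq_image :
    regionOf σ a = (Finset.range (minPer σ a)).image (fun k => (σ ^ k) a) := by
  ext b
  simp only [regionOf, Finset.mem_filter, Finset.mem_univ, true_and, Finset.mem_image,
    Finset.mem_range]
  rw [sameCycle_iff_exists_lt]

lemma card_regionOf : (regionOf σ a).card = minPer σ a := by
  rw [regionOf_eq_image, Finset.card_image_of_injOn, Finset.card_range]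
  intro i hi j hj
  exact injOn_pow_minPer σ a i (Finset.mem_range.1 hi) j (Finset.mem_range.1 hj)

lemma pow_card_regionOf_fix : (σ ^ (regionOf σ a).card) a = a := by
  rw [card_regionOf]; exact pow_minPer_fix σ a

lemma count_transfer (Q : E → Prop) [DecidablePred Q] :
    ((Finset.range (regionOf σ a).card).filter (fun k => Q ((σ ^ k) a))).card =
      ((regionOf σ a).filter Q).card := by
  rw [card_regionOf]
  refine Finset.card_bij (fun k _ => (σ ^ k) a) ?_ ?_ ?_
  · intro k hk
    simp only [Finset.mem_filter, Finset.mem_range] at hk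
    simp only [Finset.mem_filter, regionOf, Finset.mem_univ, true_and]
    exact ⟨(sameCycle_iff_exists_lt σ a).2 ⟨k, hk.1, rfl⟩, hk.2⟩
  · intro i hi j hj heq
    simp only [Finset.mem_filter, Finset.mem_range] at hi hj
    exact injOn_pow_minPer σ a i hi.1 j hj.1 heq
  · intro b hb
    simp only [Finset.mem_filter, regionOf, Finset.mem_univ, true_and] at hb
    obtain ⟨k, hk, he⟩ := (sameCycle_iff_exists_lt σ a).1 hb.1
    exact ⟨k, Finset.mem_filter.2 ⟨Finset.mem_range.2 hk, by rw [he]; exact hb.2⟩, he⟩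

lemma pow_fix_iff_card {k : ℕ} (h1 : 1 ≤ k) (h2 : k ≤ (regionOf σ a).card) :
    (σ ^ k) a = a ↔ k = (regionOf σ a).card := by
  rw [card_regionOf] at h2 ⊢
  constructor
  · intro he
    by_contra hne
    exact minPer_min σ a h1 (by omega) he
  · intro he; rw [he]; exact pow_minPer_fix σ a

end Cycle

section Walk

lemma even_2k (k : ℕ) : Even (2 * k) := ⟨k, by omega⟩

lemma not_even_2k1 (k : ℕ) : ¬ Even (2 * k + 1) := by
  rintro ⟨r, hr⟩; omega

variable {E : Type*} [Fintype E] [DecidableEq E]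
variable (op nx : Equiv.Perm E) (P : Finset E) (α₀ : E)

lemma beta_odd (k : ℕ) : beta op nx α₀ (2 * k + 1) = op (beta op nx α₀ (2 * k)) := by
  rw [beta, if_pos (even_2k k)]

lemma beta_even_succ (k : ℕ) :
    beta op nx α₀ (2 * k + 2) = nx⁻¹ (beta op nx α₀ (2 * k + 1)) := by
  rw [show 2 * k + 2 = (2 * k + 1) + 1 from rfl, beta, if_neg (not_even_2k1 k)]

lemma hstep_odd (k : ℕ) : hstep op nx P α₀ (2 * k + 1) =
    if beta op nx α₀ (2 * k + 1) ∈ P then -(Yact (hstep op nx P α₀ (2 * k)))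
      else Yact (hstep op nx P α₀ (2 * k)) := by
  rw [hstep, if_pos (even_2k k)]

lemma hstep_even_succ (k : ℕ) :
    hstep op nx P α₀ (2 * k + 2) = -(Xact (hstep op nx P α₀ (2 * k + 1))) := by
  rw [show 2 * k + 2 = (2 * k + 1) + 1 from rfl, hstep, if_neg (not_even_2k1 k)]

/-- The sign carried by the even-step vectors. -/
def Sgn (k : ℕ) : ℤ :=
  ∏ j ∈ Finset.range k, (if beta op nx α₀ (2 * j + 1) ∈ P then (1 : ℤ) else -1)

lemma Sgn_zero : Sgn op nx P α₀ 0 = 1 := by simp [Sgn]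

lemma Sgn_succ (k : ℕ) : Sgn op nx P α₀ (k + 1) =
    Sgn op nx P α₀ k * (if beta op nx α₀ (2 * k + 1) ∈ P then (1 : ℤ) else -1) := by
  rw [Sgn, Finset.prod_range_succ]; rfl

lemma Sgn_sq (k : ℕ) : Sgn op nx P α₀ k * Sgn op nx P α₀ k = 1 := by
  induction k with
  | zero => simp [Sgn_zero]
  | succ k ih =>
      rw [Sgn_succ]
      by_cases h : beta op nx α₀ (2 * k + 1) ∈ P <;> simp [h] <;> linarith

lemma hstep_spec (k : ℕ) :
    hstep op nx P α₀ (2 * k) = (Sgn op nx P α₀ k, 0) ∧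
      hstep op nx P α₀ (2 * k + 1) =
        (0, (if beta op nx α₀ (2 * k + 1) ∈ P then (-1 : ℤ) else 1) * Sgn op nx P α₀ k) := by
  induction k with
  | zero =>
      constructor
      · rw [show 2 * 0 = 0 from rfl, Sgn_zero]; rfl
      · rw [show 2 * 0 + 1 = 0 + 1 from rfl, hstep, if_pos (even_2k 0)]
        rw [show beta op nx α₀ (0 + 1) = beta op nx α₀ (2 * 0 + 1) from rfl]
        rw [show hstep op nx P α₀ 0 = ((1 : ℤ), (0 : ℤ)) from rfl, Sgn_zero]
        by_cases h : beta op nx α₀ (2 * 0 + 1) ∈ P <;>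
          simp [h, Yact_apply, Prod.ext_iff]
  | succ k ih =>
      obtain ⟨ih1, ih2⟩ := ih
      have e1 : hstep op nx P α₀ (2 * (k + 1)) = (Sgn op nx P α₀ (k + 1), 0) := by
        rw [show 2 * (k + 1) = 2 * k + 2 from by omega, hstep_even_succ, ih2, Sgn_succ]
        by_cases h : beta op nx α₀ (2 * k + 1) ∈ P <;>
          simp [h, Xact_apply, Prod.ext_iff]
      refine ⟨e1, ?_⟩
      rw [hstep_odd, e1]
      by_cases h : beta op nx α₀ (2 * (k + 1) + 1) ∈ P <;>
        simp [h, Yact_apply, Prod.ext_iff]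

lemma beta_even_pow (k : ℕ) :
    beta op nx α₀ (2 * k) = ((nx⁻¹ * op) ^ k) α₀ := by
  induction k with
  | zero => simp [beta]
  | succ k ih =>
      rw [show 2 * (k + 1) = 2 * k + 2 from by omega, beta_even_succ, beta_odd, ih,
        pow_succ' (nx⁻¹ * op) k, Equiv.Perm.mul_apply, Equiv.Perm.mul_apply]

lemma beta_closes :
    beta op nx α₀ (2 * (regionOf (nx⁻¹ * op) α₀).card) = α₀ := by
  rw [beta_even_pow]
  exact pow_card_regionOf_fix (nx⁻¹ * op) α₀

lemma Sgn_card (hP : ∀ α, α ∈ P ↔ op α ∉ P) :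
    Sgn op nx P α₀ ((regionOf (nx⁻¹ * op) α₀).card) =
      (-1 : ℤ) ^ ((regionOf (nx⁻¹ * op) α₀ ∩ P).card) := by
  set n := (regionOf (nx⁻¹ * op) α₀).card with hn
  have key : Sgn op nx P α₀ n =
      (-1 : ℤ) ^ (((Finset.range n).filter
        (fun j => ¬ (beta op nx α₀ (2 * j + 1) ∈ P))).card) := by
    rw [Sgn, ← Finset.prod_filter_mul_prod_filter_not (Finset.range n)
      (fun j => beta op nx α₀ (2 * j + 1) ∈ P)]
    rw [Finset.prod_congr rfl (fun j hj => if_pos (Finset.mem_filter.1 hj).2),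
      Finset.prod_congr rfl (fun j hj => if_neg (Finset.mem_filter.1 hj).2)]
    simp
  rw [key]
  congr 1
  have hcong : (Finset.range n).filter (fun j => ¬ (beta op nx α₀ (2 * j + 1) ∈ P)) =
      (Finset.range n).filter (fun j => (((nx⁻¹ * op) ^ j) α₀) ∈ P) := by
    apply Finset.filter_congr
    intro j _
    rw [beta_odd, ← beta_even_pow op nx α₀ j]
    exact (hP (beta op nx α₀ (2 * j))).symm
  rw [hcong, hn, count_transfer (nx⁻¹ * op) α₀ (fun b => b ∈ P),
    Finset.filter_mem_eq_inter]

end Walk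

section WalkExtra
variable {E : Type*} [Fintype E] [DecidableEq E]
variable (op nx : Equiv.Perm E) (P : Finset E) (α₀ : E)

lemma beta_even_pow' (k : ℕ) :
    beta op nx α₀ (2 * k + 2) = ((nx⁻¹ * op) ^ (k + 1)) α₀ := by
  rw [show 2 * k + 2 = 2 * (k + 1) from by omega, beta_even_pow]

end WalkExtra

section ZLemmas

lemma sum_Icc_pairs {M : Type*} [AddCommMonoid M] (f : ℕ → M) (m : ℕ) :
    ∑ i ∈ Finset.Icc 1 (2 * m), f i =
      ∑ k ∈ Finset.range m, (f (2 * k + 1) + f (2 * k + 2)) := by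
  induction m with
  | zero => simp
  | succ m ih =>
      rw [show 2 * (m + 1) = (2 * m + 1) + 1 from by omega,
        Finset.sum_Icc_succ_top (by omega) f,
        Finset.sum_Icc_succ_top (by omega) f, ih, Finset.sum_range_succ,
        show (2 * m + 1) + 1 = 2 * m + 2 from by omega, add_assoc]

variable {E : Type*} [Fintype E] [DecidableEq E]
variable (op nx : Equiv.Perm E) (P : Finset E) (α₀ : E)

lemma fst_sum {ι : Type*} (s : Finset ι) (g : ι → ℤ × ℤ) :
    (∑ i ∈ s, g i).1 = ∑ i ∈ s, (g i).1 :=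
  map_sum (AddMonoidHom.fst ℤ ℤ) g s

lemma snd_sum {ι : Type*} (s : Finset ι) (g : ι → ℤ × ℤ) :
    (∑ i ∈ s, g i).2 = ∑ i ∈ s, (g i).2 :=
  map_sum (AddMonoidHom.snd ℤ ℤ) g s

lemma zfun_apply (α : E) : zfun op nx P α₀ α =
    ∑ i ∈ Finset.Icc 1 (2 * (regionOf (nx⁻¹ * op) α₀).card),
      if beta op nx α₀ i = α then hstep op nx P α₀ i else 0 := rfl

/-- Second component of `z`: only odd walk positions contribute. -/
lemma zfun_snd (α : E) : (zfun op nx P α₀ α).2 =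
    ∑ k ∈ Finset.range (regionOf (nx⁻¹ * op) α₀).card,
      (if beta op nx α₀ (2 * k + 1) = α then (hstep op nx P α₀ (2 * k + 1)).2 else 0) := by
  rw [zfun_apply, snd_sum, sum_Icc_pairs (fun i => ((if beta op nx α₀ i = α
    then hstep op nx P α₀ i else 0) : ℤ × ℤ).2)]
  refine Finset.sum_congr rfl fun k _ => ?_
  have h2 : (hstep op nx P α₀ (2 * (k + 1))).2 = 0 := by
    rw [(hstep_spec op nx P α₀ (k + 1)).1]
  rw [show 2 * k + 2 = 2 * (k + 1) from by omega]
  rw [apply_ite Prod.snd, apply_ite Prod.snd]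
  simp [h2]

/-- First component of `z`: only even walk positions contribute. -/
lemma zfun_fst (α : E) : (zfun op nx P α₀ α).1 =
    ∑ k ∈ Finset.range (regionOf (nx⁻¹ * op) α₀).card,
      (if beta op nx α₀ (2 * k + 2) = α then (hstep op nx P α₀ (2 * k + 2)).1 else 0) := by
  rw [zfun_apply, fst_sum, sum_Icc_pairs (fun i => ((if beta op nx α₀ i = α
    then hstep op nx P α₀ i else 0) : ℤ × ℤ).1)]
  refine Finset.sum_congr rfl fun k _ => ?_
  have h1 : (hstep op nx P α₀ (2 * k + 1)).1 = 0 := by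
    rw [(hstep_spec op nx P α₀ k).2]
  rw [apply_ite Prod.fst, apply_ite Prod.fst]
  simp [h1]

/-- The defect of `z` vanishes. -/
lemma dd_zfun (hnx3 : nx * nx * nx = 1) (α : E) :
    dd nx (zfun op nx P α₀) α = 0 := by
  rw [dd, zfun_fst, zfun_snd, ← Finset.sum_add_distrib]
  refine Finset.sum_eq_zero fun k _ => ?_
  have hcond : (beta op nx α₀ (2 * k + 2) = α) ↔ (beta op nx α₀ (2 * k + 1) = nx α) := by
    rw [beta_even_succ]
    constructor
    · intro h; rw [← h, Equiv.Perm.apply_inv_self]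
    · intro h; rw [h]; exact nx.inv_apply_self α ▸ by rw [h] at *; simp
  have hval : (hstep op nx P α₀ (2 * k + 2)).1 = -(hstep op nx P α₀ (2 * k + 1)).2 := by
    rw [hstep_even_succ, (hstep_spec op nx P α₀ k).2]
    simp [Xact_apply]
  by_cases hc : beta op nx α₀ (2 * k + 1) = nx α
  · rw [if_pos (hcond.2 hc), if_pos hc, hval]; ring
  · rw [if_neg (fun h => hc (hcond.1 h)), if_neg hc]; ring

/-- `z` satisfies all vertex conditions. -/
lemma zfun_condV (hnx3 : nx * nx * nx = 1) (hnxf : ∀ α, nx α ≠ α) (α : E) :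
    condV nx α (zfun op nx P α₀) = 0 := by
  rw [condV_eq, zfun_apply, zfun_apply, zfun_apply, map_sum, map_sum, map_sum]
  rw [← Finset.sum_add_distrib, ← Finset.sum_add_distrib]
  rw [sum_Icc_pairs]
  refine Finset.sum_eq_zero fun k _ => ?_
  have hinv : ∀ x y : E, (nx⁻¹ x = y) ↔ (x = nx y) := fun x y => by
    constructor
    · intro h; rw [← h, Equiv.Perm.apply_inv_self]
    · intro h; rw [h, Equiv.Perm.inv_apply_self]
  have hβ : beta op nx α₀ (2 * k + 2) = nx⁻¹ (beta op nx α₀ (2 * k + 1)) :=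
    beta_even_succ op nx α₀ k
  have hh : hstep op nx P α₀ (2 * k + 2) = -(Xact (hstep op nx P α₀ (2 * k + 1))) :=
    hstep_even_succ op nx P α₀ k
  set γ := beta op nx α₀ (2 * k + 1) with hγ
  set v := hstep op nx P α₀ (2 * k + 1) with hv
  rw [hβ, hh]
  have h3 : nx (nx (nx α)) = α := nx_nx_nx nx hnx3 α
  have d1 : ¬ (nx α = α) := hnxf α
  have d2 : ¬ (α = nx α) := fun h => d1 h.symm
  have d3 : ¬ (nx (nx α) = α) := nx_nx_ne_self hnx3 hnxf α
  have d4 : ¬ (α = nx (nx α)) := fun h => d3 h.symm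
  simp only [apply_ite Xact, map_zero, hinv, h3]
  by_cases h1 : γ = α <;> by_cases h2 : γ = nx α <;> by_cases h3 : γ = nx (nx α) <;>
    simp [h1, h2, h3, d1, d2, d3, d4, Xact_Xact_Xact] <;> abel

lemma sum_pair_shift {M : Type*} [AddCommGroup M] (G Go : ℕ → M) (n : ℕ)
    (hpair : ∀ k, G k + Go k = 0) (hclose : G n = G 0) :
    ∑ k ∈ Finset.range n, (Go k + G (k + 1)) = 0 := by
  have h1 : ∀ k, Go k + G (k + 1) = (G k + Go k) + (G (k + 1) - G k) := fun k => by abel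
  rw [Finset.sum_congr rfl fun k _ => h1 k, Finset.sum_add_distrib,
    Finset.sum_range_sub G n, Finset.sum_eq_zero fun k _ => hpair k, hclose]
  abel

/-- `z` satisfies the edge conditions (this needs evenness of `|R ∩ P|`). -/
lemma zfun_condE (hop2 : op * op = 1) (hopf : ∀ α, op α ≠ α)
    (hP : ∀ α, α ∈ P ↔ op α ∉ P)
    (hev : Even ((regionOf (nx⁻¹ * op) α₀ ∩ P).card))
    {α : E} (hα : α ∈ P) :
    condE op α (zfun op nx P α₀) = 0 := by
  have hFv : condE op α (zfun op nx P α₀) =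
      ∑ i ∈ Finset.Icc 1 (2 * (regionOf (nx⁻¹ * op) α₀).card),
        ((if beta op nx α₀ i = α then hstep op nx P α₀ i else 0) +
          Yact (if beta op nx α₀ i = op α then hstep op nx P α₀ i else 0)) := by
    rw [condE_eq, zfun_apply, zfun_apply, map_sum, ← Finset.sum_add_distrib]
  rw [hFv, sum_Icc_pairs]
  have hstep2 : ∀ k : ℕ,
      ((if beta op nx α₀ (2 * k + 2) = α then hstep op nx P α₀ (2 * k + 2) else 0) +
        Yact (if beta op nx α₀ (2 * k + 2) = op α then hstep op nx P α₀ (2 * k + 2) else 0)) =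
      ((if beta op nx α₀ (2 * (k + 1)) = α then hstep op nx P α₀ (2 * (k + 1)) else 0) +
        Yact (if beta op nx α₀ (2 * (k + 1)) = op α then hstep op nx P α₀ (2 * (k + 1)) else 0)) := by
    intro k
    rw [show 2 * (k + 1) = 2 * k + 2 from by omega]
  rw [Finset.sum_congr rfl fun k _ => by rw [hstep2 k]]
  have hpair : ∀ k : ℕ,
      (((if beta op nx α₀ (2 * k) = α then hstep op nx P α₀ (2 * k) else 0) +
        Yact (if beta op nx α₀ (2 * k) = op α then hstep op nx P α₀ (2 * k) else 0)) +
       ((if beta op nx α₀ (2 * k + 1) = α then hstep op nx P α₀ (2 * k + 1) else 0) +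
        Yact (if beta op nx α₀ (2 * k + 1) = op α then hstep op nx P α₀ (2 * k + 1) else 0))) = 0 := by
    intro k
    have hβo : beta op nx α₀ (2 * k + 1) = op (beta op nx α₀ (2 * k)) := beta_odd op nx α₀ k
    have hho : hstep op nx P α₀ (2 * k + 1) =
        if op (beta op nx α₀ (2 * k)) ∈ P then -(Yact (hstep op nx P α₀ (2 * k)))
          else Yact (hstep op nx P α₀ (2 * k)) := by
      rw [hstep_odd, hβo]
    rw [hβo, hho]
    set γ := beta op nx α₀ (2 * k)
    set w := hstep op nx P α₀ (2 * k)
    have iff1 : (op γ = α) ↔ (γ = op α) := by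
      constructor
      · intro h; rw [← h, op_op op hop2]
      · intro h; rw [h, op_op op hop2]
    have iff2 : (op γ = op α) ↔ (γ = α) := ⟨fun h => op.injective h, fun h => by rw [h]⟩
    by_cases hc1 : γ = α
    · have hne : ¬ (γ = op α) := by
        rw [hc1]; intro h; exact hopf α (by rw [← h])
      have hopP : op γ ∉ P := by rw [hc1]; exact (hP α).1 hα
      rw [if_pos hc1, if_neg hne, if_neg (fun h => hne (iff1.1 h)), if_pos (iff2.2 hc1),
        if_neg hopP, Yact_Yact]
      simp
    · by_cases hc2 : γ = op α
      · have hopP : op γ ∈ P := by rw [hc2, op_op op hop2]; exact hα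
        rw [if_neg hc1, if_pos hc2, if_pos (iff1.2 hc2), if_neg (fun h => hc1 (iff2.1 h)),
          if_pos hopP]
        simp
      · rw [if_neg hc1, if_neg hc2, if_neg (fun h => hc2 (iff1.1 h)),
          if_neg (fun h => hc1 (iff2.1 h))]
        simp
  have hclose :
      ((if beta op nx α₀ (2 * (regionOf (nx⁻¹ * op) α₀).card) = α
          then hstep op nx P α₀ (2 * (regionOf (nx⁻¹ * op) α₀).card) else 0) +
        Yact (if beta op nx α₀ (2 * (regionOf (nx⁻¹ * op) α₀).card) = op α
          then hstep op nx P α₀ (2 * (regionOf (nx⁻¹ * op) α₀).card) else 0)) =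
      ((if beta op nx α₀ (2 * 0) = α then hstep op nx P α₀ (2 * 0) else 0) +
        Yact (if beta op nx α₀ (2 * 0) = op α then hstep op nx P α₀ (2 * 0) else 0)) := by
    have hβ : beta op nx α₀ (2 * (regionOf (nx⁻¹ * op) α₀).card) = α₀ := beta_closes op nx α₀
    have hsgn : Sgn op nx P α₀ (regionOf (nx⁻¹ * op) α₀).card = 1 := by
      rw [Sgn_card op nx P α₀ hP]
      exact Even.neg_one_pow hev
    have hh : hstep op nx P α₀ (2 * (regionOf (nx⁻¹ * op) α₀).card) = (1, 0) := by
      rw [(hstep_spec op nx P α₀ _).1, hsgn]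
    rw [hβ, hh]
    rfl
  exact sum_pair_shift
    (fun k => (if beta op nx α₀ (2 * k) = α then hstep op nx P α₀ (2 * k) else 0) +
      Yact (if beta op nx α₀ (2 * k) = op α then hstep op nx P α₀ (2 * k) else 0))
    (fun k => (if beta op nx α₀ (2 * k + 1) = α then hstep op nx P α₀ (2 * k + 1) else 0) +
      Yact (if beta op nx α₀ (2 * k + 1) = op α then hstep op nx P α₀ (2 * k + 1) else 0))
    _ hpair hclose

end ZLemmas

section ZValues

variable {E : Type*} [Fintype E] [DecidableEq E]
variable (op nx : Equiv.Perm E) (P : Finset E) (α₀ : E)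

lemma region_pos (σ : Equiv.Perm E) (a : E) : 0 < (regionOf σ a).card := by
  refine Finset.card_pos.2 ⟨a, ?_⟩
  simp [regionOf, Equiv.Perm.SameCycle.refl]

lemma sameCycle_iff_card (σ : Equiv.Perm E) (a b : E) :
    σ.SameCycle a b ↔ ∃ k < (regionOf σ a).card, (σ ^ k) a = b := by
  rw [card_regionOf]; exact sameCycle_iff_exists_lt σ a

lemma injOn_pow_card (σ : Equiv.Perm E) (a : E) :
    ∀ i < (regionOf σ a).card, ∀ j < (regionOf σ a).card,
      (σ ^ i) a = (σ ^ j) a → i = j := by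
  rw [card_regionOf]; exact injOn_pow_minPer σ a

lemma regionOf_congr {σ : Equiv.Perm E} {a b : E} (hab : σ.SameCycle a b) :
    regionOf σ a = regionOf σ b := by
  ext c
  simp only [regionOf, Finset.mem_filter, Finset.mem_univ, true_and]
  exact ⟨fun h => hab.symm.trans h, fun h => hab.trans h⟩

/-- `z` evaluated at its base point: first coordinate is `1`. -/
lemma zfun_fst_base (hP : ∀ α, α ∈ P ↔ op α ∉ P)
    (hev : Even ((regionOf (nx⁻¹ * op) α₀ ∩ P).card)) :
    (zfun op nx P α₀ α₀).1 = 1 := by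
  set n := (regionOf (nx⁻¹ * op) α₀).card with hn
  have hpos : 0 < n := region_pos _ _
  rw [zfun_fst]
  rw [Finset.sum_eq_single_of_mem (n - 1) (Finset.mem_range.2 (by omega))]
  · have hidx : 2 * (n - 1) + 2 = 2 * n := by omega
    rw [hidx]
    have hβ : beta op nx α₀ (2 * n) = α₀ := beta_closes op nx α₀
    have hsgn : Sgn op nx P α₀ n = 1 := by
      rw [hn, Sgn_card op nx P α₀ hP]; exact Even.neg_one_pow hev
    have hh : hstep op nx P α₀ (2 * n) = (1, 0) := by
      rw [(hstep_spec op nx P α₀ n).1, hsgn]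
    rw [if_pos hβ, hh]
  · intro j hj hjne
    rw [if_neg]
    intro hc
    rw [beta_even_pow' op nx α₀ j] at hc
    have h1 : j + 1 = n := by
      refine (pow_fix_iff_card (nx⁻¹ * op) α₀ (by omega) ?_).1 hc
      rw [← hn]; exact Nat.succ_le_of_lt (Finset.mem_range.1 hj)
    exact hjne (by omega)

/-- `z` vanishes in the first coordinate off its region. -/
lemma zfun_fst_nosc {α : E} (hnsc : ¬ (nx⁻¹ * op).SameCycle α₀ α) :
    (zfun op nx P α₀ α).1 = 0 := by
  rw [zfun_fst]
  refine Finset.sum_eq_zero fun k _ => ?_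
  rw [if_neg]
  intro hc
  rw [beta_even_pow' op nx α₀ k] at hc
  exact hnsc ⟨((k + 1 : ℕ) : ℤ), by rw [zpow_natCast]; exact hc⟩

/-- The odd walk value of `z`. -/
lemma zfun_snd_at {k : ℕ} (hk : k < (regionOf (nx⁻¹ * op) α₀).card) :
    (zfun op nx P α₀ (beta op nx α₀ (2 * k + 1))).2 = (hstep op nx P α₀ (2 * k + 1)).2 := by
  rw [zfun_snd]
  rw [Finset.sum_eq_single_of_mem k (Finset.mem_range.2 hk)]
  · rw [if_pos rfl]
  · intro j hj hjne
    rw [if_neg]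
    intro hc
    rw [beta_odd, beta_odd, beta_even_pow, beta_even_pow] at hc
    have := op.injective hc
    exact hjne (injOn_pow_card (nx⁻¹ * op) α₀ j (Finset.mem_range.1 hj) k hk this)

/-- `z` vanishes in the second coordinate if `op α` is off its region. -/
lemma zfun_snd_nosc (hop2 : op * op = 1) {α : E} (hnsc : ¬ (nx⁻¹ * op).SameCycle α₀ (op α)) :
    (zfun op nx P α₀ α).2 = 0 := by
  rw [zfun_snd]
  refine Finset.sum_eq_zero fun k _ => ?_
  rw [if_neg]
  intro hc
  rw [beta_odd, beta_even_pow] at hc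
  have : ((nx⁻¹ * op) ^ k) α₀ = op α := by
    apply op.injective
    rw [hc, op_op op hop2]
  exact hnsc ⟨(k : ℤ), by rw [zpow_natCast]; exact this⟩

end ZValues

section WLemmas

variable {E : Type*} [Fintype E] [DecidableEq E]
variable (op nx : Equiv.Perm E) (P : Finset E)

/-- For defect-free `h ∈ H`, the scalar `s = h(·)₂` transports along edges. -/
lemma W_star (hop2 : op * op = 1) (hP : ∀ α, α ∈ P ↔ op α ∉ P)
    {h : E → ℤ × ℤ} (hh : h ∈ HGrp op nx P) (hd : ∀ α, dd nx h α = 0) (γ : E) :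
    (h (op γ)).2 = (if γ ∈ P then (-1 : ℤ) else 1) * (h (nx γ)).2 := by
  obtain ⟨_, hE⟩ := (mem_HGrp_iff op nx P).1 hh
  have hdγ : (h γ).1 = -(h (nx γ)).2 := by
    have := hd γ; rw [dd] at this; linarith
  by_cases hγ : γ ∈ P
  · have he := hE γ hγ
    rw [condE_eq] at he
    have e1 : (h γ).1 + -(h (op γ)).2 = 0 := congrArg Prod.fst he
    rw [if_pos hγ]
    linarith [e1, hdγ]
  · have hop : op γ ∈ P := by
      by_contra hc
      exact hγ ((hP γ).2 hc)
    have he := hE (op γ) hop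
    rw [condE_eq, op_op op hop2] at he
    have e2 : (h (op γ)).2 + (h γ).1 = 0 := congrArg Prod.snd he
    rw [if_neg hγ]
    linarith [e2, hdγ]

variable (α₀ : E)

/-- Walk recurrence for the scalar of a defect-free `h`. -/
lemma W_rec (hop2 : op * op = 1) (hnx3 : nx * nx * nx = 1) (hP : ∀ α, α ∈ P ↔ op α ∉ P)
    {h : E → ℤ × ℤ} (hh : h ∈ HGrp op nx P) (hd : ∀ α, dd nx h α = 0) (k : ℕ) :
    (h (beta op nx α₀ (2 * (k + 1) + 1))).2 =
      (if beta op nx α₀ (2 * (k + 1)) ∈ P then (-1 : ℤ) else 1) *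
        (h (beta op nx α₀ (2 * k + 1))).2 := by
  have h1 : beta op nx α₀ (2 * (k + 1) + 1) = op (beta op nx α₀ (2 * (k + 1))) :=
    beta_odd op nx α₀ (k + 1)
  have h2 : nx (beta op nx α₀ (2 * (k + 1))) = beta op nx α₀ (2 * k + 1) := by
    rw [show 2 * (k + 1) = 2 * k + 2 from by omega, beta_even_succ,
      Equiv.Perm.apply_inv_self]
  rw [h1, W_star op nx P hop2 hP hh hd (beta op nx α₀ (2 * (k + 1))), h2]

/-- Walk recurrence for the `hstep` scalar. -/
lemma hstep_rec (hP : ∀ α, α ∈ P ↔ op α ∉ P) (k : ℕ) :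
    (hstep op nx P α₀ (2 * (k + 1) + 1)).2 =
      (if beta op nx α₀ (2 * (k + 1)) ∈ P then (-1 : ℤ) else 1) *
        (hstep op nx P α₀ (2 * k + 1)).2 := by
  rw [(hstep_spec op nx P α₀ (k + 1)).2, (hstep_spec op nx P α₀ k).2, Sgn_succ]
  have hc : beta op nx α₀ (2 * (k + 1)) ∈ P ↔ ¬ (beta op nx α₀ (2 * (k + 1) + 1) ∈ P) := by
    have := hP (beta op nx α₀ (2 * (k + 1)))
    rwa [← beta_odd op nx α₀ (k + 1)] at this
  by_cases c1 : beta op nx α₀ (2 * k + 1) ∈ P <;>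
    by_cases c2 : beta op nx α₀ (2 * (k + 1)) ∈ P
  · have c3 : ¬ (beta op nx α₀ (2 * (k + 1) + 1) ∈ P) := hc.1 c2
    rw [if_neg c3, if_pos c2, if_pos c1, if_pos c1]; ring
  · have c3 : beta op nx α₀ (2 * (k + 1) + 1) ∈ P := by
      by_contra hcc; exact c2 (hc.2 hcc)
    rw [if_pos c3, if_neg c2, if_pos c1, if_pos c1]; ring
  · have c3 : ¬ (beta op nx α₀ (2 * (k + 1) + 1) ∈ P) := hc.1 c2
    rw [if_neg c3, if_pos c2, if_neg c1, if_neg c1]; ring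
  · have c3 : beta op nx α₀ (2 * (k + 1) + 1) ∈ P := by
      by_contra hcc; exact c2 (hc.2 hcc)
    rw [if_pos c3, if_neg c2, if_neg c1, if_neg c1]; ring

lemma tstep_sq (k : ℕ) :
    (hstep op nx P α₀ (2 * k + 1)).2 * (hstep op nx P α₀ (2 * k + 1)).2 = 1 := by
  rw [(hstep_spec op nx P α₀ k).2]
  have := Sgn_sq op nx P α₀ k
  by_cases c : beta op nx α₀ (2 * k + 1) ∈ P <;> simp [c] <;> linarith

/-- The conserved quantity along the walk. -/
lemma walk_inv (hop2 : op * op = 1) (hnx3 : nx * nx * nx = 1)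
    (hP : ∀ α, α ∈ P ↔ op α ∉ P)
    {h : E → ℤ × ℤ} (hh : h ∈ HGrp op nx P) (hd : ∀ α, dd nx h α = 0) (k : ℕ) :
    (h (beta op nx α₀ (2 * k + 1))).2 * (hstep op nx P α₀ (2 * k + 1)).2 =
      (h (beta op nx α₀ 1)).2 * (hstep op nx P α₀ 1).2 := by
  induction k with
  | zero => rw [show 2 * 0 + 1 = 1 from by norm_num]
  | succ k ih =>
      rw [W_rec op nx P α₀ hop2 hnx3 hP hh hd k, hstep_rec op nx P α₀ hP k]
      by_cases c : beta op nx α₀ (2 * (k + 1)) ∈ P <;> simp [c] <;>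
        rw [show ∀ a b : ℤ, a * b = b * a from fun a b => mul_comm a b] at * <;>
        linarith [ih]

/-- The scalar value along the walk. -/
lemma walk_value (hop2 : op * op = 1) (hnx3 : nx * nx * nx = 1)
    (hP : ∀ α, α ∈ P ↔ op α ∉ P)
    {h : E → ℤ × ℤ} (hh : h ∈ HGrp op nx P) (hd : ∀ α, dd nx h α = 0) (k : ℕ) :
    (h (beta op nx α₀ (2 * k + 1))).2 =
      ((h (beta op nx α₀ 1)).2 * (hstep op nx P α₀ 1).2) *
        (hstep op nx P α₀ (2 * k + 1)).2 := by
  have h1 := walk_inv op nx P α₀ hop2 hnx3 hP hh hd k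
  have h2 := tstep_sq op nx P α₀ k
  calc (h (beta op nx α₀ (2 * k + 1))).2
      = (h (beta op nx α₀ (2 * k + 1))).2 *
          ((hstep op nx P α₀ (2 * k + 1)).2 * (hstep op nx P α₀ (2 * k + 1)).2) := by
        rw [h2, mul_one]
    _ = ((h (beta op nx α₀ (2 * k + 1))).2 * (hstep op nx P α₀ (2 * k + 1)).2) *
          (hstep op nx P α₀ (2 * k + 1)).2 := by ring
    _ = ((h (beta op nx α₀ 1)).2 * (hstep op nx P α₀ 1).2) *
          (hstep op nx P α₀ (2 * k + 1)).2 := by rw [h1]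

/-- Around an odd region the scalar must vanish. -/
lemma W_odd_zero (hop2 : op * op = 1) (hnx3 : nx * nx * nx = 1)
    (hP : ∀ α, α ∈ P ↔ op α ∉ P)
    {h : E → ℤ × ℤ} (hh : h ∈ HGrp op nx P) (hd : ∀ α, dd nx h α = 0)
    (hodd : ¬ Even ((regionOf (nx⁻¹ * op) α₀ ∩ P).card)) :
    (h (beta op nx α₀ 1)).2 = 0 := by
  set n := (regionOf (nx⁻¹ * op) α₀).card with hn
  have hval := walk_value op nx P α₀ hop2 hnx3 hP hh hd n
  have hβ : beta op nx α₀ (2 * n + 1) = beta op nx α₀ 1 := by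
    rw [beta_odd op nx α₀ n, hn, beta_closes op nx α₀,
      show (1 : ℕ) = 2 * 0 + 1 from by norm_num, beta_odd op nx α₀ 0]
    rfl
  have hsgn : Sgn op nx P α₀ n = -1 := by
    rw [hn, Sgn_card op nx P α₀ hP]
    exact Odd.neg_one_pow (Nat.not_even_iff_odd.1 hodd)
  have ht : (hstep op nx P α₀ (2 * n + 1)).2 =
      -((hstep op nx P α₀ 1).2) := by
    rw [(hstep_spec op nx P α₀ n).2, hsgn, hβ,
      show (1 : ℕ) = 2 * 0 + 1 from by norm_num, (hstep_spec op nx P α₀ 0).2, Sgn_zero]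
    by_cases c : beta op nx α₀ (2 * 0 + 1) ∈ P <;> simp [c]
  have htsq : (hstep op nx P α₀ 1).2 * (hstep op nx P α₀ 1).2 = 1 := by
    rw [show (1 : ℕ) = 2 * 0 + 1 from by norm_num]
    exact tstep_sq op nx P α₀ 0
  rw [hβ, ht] at hval
  set s := (h (beta op nx α₀ 1)).2
  set t := (hstep op nx P α₀ 1).2
  -- hval : s = (s * t) * (-t)
  have e : s * t * -t = -(s * (t * t)) := by ring
  rw [htsq, mul_one] at e
  rw [e] at hval
  linarith

end WLemmas


/-- each fundamental cycle `z_R` of a region `R` with `|R ∩ P|` even lies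
in `H_Γ` and in the radical of the form `q`, and, taken over a transversal of the
regions with `|R ∩ P|` even, the fundamental cycles form a ℤ-basis of the radical of
`(H_Γ, q)`. -/
theorem fundamental_cycles_basis_of_radical [Fintype E] [DecidableEq E] [Nonempty E]
    (op nx : Equiv.Perm E) (P : Finset E)
    (hop2 : op * op = 1) (hopf : ∀ α, op α ≠ α)
    (hnx3 : nx * nx * nx = 1) (hnxf : ∀ α, nx α ≠ α)
    (hconn : ∀ a b : E, ∃ w ∈ Subgroup.closure ({op, nx} : Set (Equiv.Perm E)), w a = b)
    (hP : ∀ α, α ∈ P ↔ op α ∉ P) :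
    (∀ α₀ : E, Even ((regionOf (nx⁻¹ * op) α₀ ∩ P).card) →
      zfun op nx P α₀ ∈ HGrp op nx P ∧
        ∀ g ∈ HGrp op nx P, Bq nx (zfun op nx P α₀) g = 0) ∧
    ∀ T : Finset E,
      ((∀ β ∈ T, Even ((regionOf (nx⁻¹ * op) β ∩ P).card)) ∧
        (∀ α : E, Even ((regionOf (nx⁻¹ * op) α ∩ P).card) →
          ∃! β, β ∈ T ∧ (nx⁻¹ * op).SameCycle β α)) →
      (∀ c : E → ℤ, (∑ β ∈ T, c β • zfun op nx P β) = 0 → ∀ β ∈ T, c β = 0) ∧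
      (∀ h ∈ HGrp op nx P, (∀ g ∈ HGrp op nx P, Bq nx h g = 0) →
        ∃ c : E → ℤ, h = ∑ β ∈ T, c β • zfun op nx P β) := by
  have zmem : ∀ α₀ : E, Even ((regionOf (nx⁻¹ * op) α₀ ∩ P).card) →
      zfun op nx P α₀ ∈ HGrp op nx P := fun α₀ hev =>
    (mem_HGrp_iff op nx P).2 ⟨fun α => zfun_condV op nx P α₀ hnx3 hnxf α,
      fun α hα => zfun_condE op nx P α₀ hop2 hopf hP hev hα⟩
  constructor
  · intro α₀ hev
    refine ⟨zmem α₀ hev, ?_⟩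
    intro g hg
    rw [Bq_eq_dd op nx P hop2 hnx3 hP (zmem α₀ hev) hg,
      Finset.sum_eq_zero (fun α _ => by rw [dd_zfun op nx P α₀ hnx3 α, zero_mul])]
    simp
  · rintro T ⟨hT1, hT2⟩
    have hTd : ∀ β ∈ T, ∀ β' ∈ T, (nx⁻¹ * op).SameCycle β' β → β' = β := by
      intro β hβ β' hβ' hsc
      obtain ⟨u, _, huniq⟩ := hT2 β (hT1 β hβ)
      have e1 := huniq β ⟨hβ, Equiv.Perm.SameCycle.refl _ _⟩
      have e2 := huniq β' ⟨hβ', hsc⟩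
      rw [e2, e1]
    constructor
    · -- linear independence
      intro c hsum β hβ
      have happ : (∑ β' ∈ T, (c β' • zfun op nx P β') β) = 0 := by
        have := congrFun hsum β
        rwa [Finset.sum_apply] at this
      have hfst : (∑ β' ∈ T, ((c β' • zfun op nx P β') β).1) = 0 := by
        have := congrArg Prod.fst happ
        rwa [fst_sum] at this
      have hterm : ∀ β' ∈ T, ((c β' • zfun op nx P β') β).1 =
          c β' * (zfun op nx P β' β).1 := by
        intro β' _
        rw [Pi.smul_apply, Prod.smul_fst, smul_eq_mul]
      rw [Finset.sum_congr rfl hterm] at hfst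
      rw [Finset.sum_eq_single_of_mem β hβ] at hfst
      · rw [zfun_fst_base op nx P β hP (hT1 β hβ), mul_one] at hfst
        exact hfst
      · intro β' hβ' hne
        have hnsc : ¬ (nx⁻¹ * op).SameCycle β' β := by
          intro hsc
          exact hne (hTd β hβ β' hβ' hsc)
        rw [zfun_fst_nosc op nx P β' hnsc, mul_zero]
    · -- spanning
      intro h hh hrad
      have hd : ∀ α, dd nx h α = 0 :=
        radical_dd_zero op nx P hop2 hnx3 hP hh (hrad h hh)
      refine ⟨fun β => (h (op β)).2 * (hstep op nx P β 1).2, ?_⟩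
      have EQ2 : ∀ α : E, (h α).2 =
          ∑ β ∈ T, (h (op β)).2 * (hstep op nx P β 1).2 * (zfun op nx P β α).2 := by
        intro α
        by_cases hevα : Even ((regionOf (nx⁻¹ * op) (op α) ∩ P).card)
        · obtain ⟨βs, ⟨hβT, hβsc⟩, huniq⟩ := hT2 (op α) hevα
          obtain ⟨k, hk, hke⟩ := (sameCycle_iff_card (nx⁻¹ * op) βs (op α)).1 hβsc
          have hα : beta op nx βs (2 * k + 1) = α := by
            rw [beta_odd, beta_even_pow, hke, op_op op hop2]
          have hzero : ∀ β' ∈ T, β' ≠ βs →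
              (h (op β')).2 * (hstep op nx P β' 1).2 * (zfun op nx P β' α).2 = 0 := by
            intro β' hβ' hne
            have hnsc : ¬ (nx⁻¹ * op).SameCycle β' (op α) := by
              intro hsc
              exact hne (huniq β' ⟨hβ', hsc⟩)
            rw [zfun_snd_nosc op nx P β' hop2 hnsc, mul_zero]
          rw [Finset.sum_eq_single_of_mem βs hβT hzero]
          have hz := zfun_snd_at op nx P βs hk
          rw [hα] at hz
          rw [hz]
          have hwv := walk_value op nx P βs hop2 hnx3 hP hh hd k
          rw [hα] at hwv
          have hb1 : beta op nx βs 1 = op βs := by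
            rw [show (1 : ℕ) = 2 * 0 + 1 from by norm_num, beta_odd]
            rfl
          rw [hb1] at hwv
          exact hwv
        · have hs0 : (h α).2 = 0 := by
            have hw := W_odd_zero op nx P (op α) hop2 hnx3 hP hh hd hevα
            have hb1 : beta op nx (op α) 1 = α := by
              rw [show (1 : ℕ) = 2 * 0 + 1 from by norm_num, beta_odd]
              show op (op α) = α
              exact op_op op hop2 α
            rwa [hb1] at hw
          rw [hs0]
          symm
          refine Finset.sum_eq_zero fun β' hβ' => ?_
          have hnsc : ¬ (nx⁻¹ * op).SameCycle β' (op α) := by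
            intro hsc
            have hre : regionOf (nx⁻¹ * op) β' = regionOf (nx⁻¹ * op) (op α) :=
              regionOf_congr hsc
            exact hevα (hre ▸ hT1 β' hβ')
          rw [zfun_snd_nosc op nx P β' hop2 hnsc, mul_zero]
      funext α
      rw [Finset.sum_apply]
      apply Prod.ext
      · rw [fst_sum]
        simp only [Pi.smul_apply, Prod.smul_fst, smul_eq_mul]
        have hterm : ∀ β' ∈ T,
            (h (op β')).2 * (hstep op nx P β' 1).2 * (zfun op nx P β' α).1 =
            -((h (op β')).2 * (hstep op nx P β' 1).2 * (zfun op nx P β' (nx α)).2) := by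
          intro β' _
          have hzdd : (zfun op nx P β' α).1 = -(zfun op nx P β' (nx α)).2 := by
            have := dd_zfun op nx P β' hnx3 α
            rw [dd] at this
            linarith
          rw [hzdd]
          ring
        rw [Finset.sum_congr rfl hterm, Finset.sum_neg_distrib, ← EQ2 (nx α)]
        have := hd α
        rw [dd] at this
        linarith
      · rw [snd_sum]
        simp only [Pi.smul_apply, Prod.smul_snd, smul_eq_mul]
        rw [← EQ2 α]
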